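/- arXiv:2011.06223 — 7 statements merged into one kernel-verified Lean document; each statement's English description precedes it below -/
import Mathlib

section
/- Under the delay model, for every real t, the cumulative distribution function of the total per-epoch delay T satisfies ℙ(T ≤ t) = Σ_{ν=2}^{∞} (ν−1)(1−p)² p^{ν−2} · max(0, 1 − exp(−(αμ/ℓ̃)(t − ℓ̃/μ − τν))); equivalently, the expected return E[ℓ̃ · 1_{T ≤ t}] = Σ_{ν=2}^{∞} (ν−1)(1−p)² p^{ν−2} · max(0, f_ν(t; ℓ̃)), where f_ν(t; ℓ) = ℓ(1 − exp(−(αμ/ℓ)(t − ℓ/μ − τν))). -/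
open MeasureTheory ProbabilityTheory Real


lemma antidiag_sum (p : ℝ) (ν : ℕ) :
    ∑ ab ∈ Finset.HasAntidiagonal.antidiagonal ν,
      ((if 1 ≤ ab.1 then p ^ (ab.1 - 1) * (1 - p) else 0) *
       (if 1 ≤ ab.2 then p ^ (ab.2 - 1) * (1 - p) else 0)) =
    ((ν - 1 : ℕ) : ℝ) * ((1 - p) ^ 2 * p ^ (ν - 2)) := by
  rw [Finset.Nat.sum_antidiagonal_eq_sum_range_succ_mk]
  have hcong : ∀ k ∈ Finset.range (ν + 1),
      (if 1 ≤ k then p ^ (k - 1) * (1 - p) else 0) *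
        (if 1 ≤ ν - k then p ^ (ν - k - 1) * (1 - p) else 0) =
      if k ∈ Finset.Icc 1 (ν - 1) then (1 - p) ^ 2 * p ^ (ν - 2) else 0 := by
    intro k hk
    rw [Finset.mem_range] at hk
    by_cases h1 : 1 ≤ k
    · by_cases h2 : 1 ≤ ν - k
      · have hmem : k ∈ Finset.Icc 1 (ν - 1) := by
          rw [Finset.mem_Icc]; omega
        have hpow : (k - 1) + (ν - k - 1) = ν - 2 := by omega
        rw [if_pos h1, if_pos h2, if_pos hmem, ← hpow, pow_add]; ring
      · have hmem : k ∉ Finset.Icc 1 (ν - 1) := by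
          rw [Finset.mem_Icc]; omega
        rw [if_neg h2, if_neg hmem, mul_zero]
    · have hmem : k ∉ Finset.Icc 1 (ν - 1) := by
        rw [Finset.mem_Icc]; omega
      rw [if_neg h1, if_neg hmem, zero_mul]
  rw [Finset.sum_congr rfl hcong, Finset.sum_ite_mem,
    Finset.inter_eq_right.mpr (by intro k hk; rw [Finset.mem_Icc] at hk; rw [Finset.mem_range]; omega),
    Finset.sum_const, Nat.card_Icc, nsmul_eq_mul]
  norm_num

/-- Under the delay model `T = ℓ̃/μ + T₂ + τ*(N₁ + N₂)`, where `T₂` is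
exponentially distributed with rate `γ = α*μ/ℓ̃`, `N₁, N₂` are i.i.d. geometric random variables
on `{1,2,...}` with `ℙ(N = x) = p^(x-1) * (1-p)`, and `T₂, N₁, N₂` are mutually independent, for
every real `t` the CDF of the total per-epoch delay satisfies
`ℙ(T ≤ t) = Σ_{ν≥2} (ν-1)*(1-p)^2*p^(ν-2) * max 0 (1 - exp (-(α*μ/ℓ̃)*(t - ℓ̃/μ - τ*ν)))`;
equivalently, the expected return `E[ℓ̃ * 1_{T ≤ t}]` equals
`Σ_{ν≥2} (ν-1)*(1-p)^2*p^(ν-2) * max 0 (f_ν(t; ℓ̃))` with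
`f_ν(t; ℓ) = ℓ * (1 - exp (-(α*μ/ℓ)*(t - ℓ/μ - τ*ν)))`. -/
theorem delay_cdf_and_expected_return
    {Ω : Type*} [MeasureSpace Ω] [IsProbabilityMeasure (ℙ : Measure Ω)]
    (μ α τ p ℓt : ℝ) (hμ : 0 < μ) (hα : 0 < α) (hτ : 0 < τ)
    (hp0 : 0 ≤ p) (hp1 : p < 1) (hℓ : 0 < ℓt)
    (T₂ : Ω → ℝ) (N₁ N₂ : Ω → ℕ)
    (hT₂meas : Measurable T₂) (hN₁meas : Measurable N₁) (hN₂meas : Measurable N₂)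
    (hT₂cdf : ∀ s : ℝ, (ℙ {ω | T₂ ω ≤ s}).toReal =
      if 0 ≤ s then 1 - Real.exp (-(α * μ / ℓt) * s) else 0)
    (hN₁pmf : ∀ x : ℕ,
      (ℙ {ω | N₁ ω = x}).toReal = if 1 ≤ x then p ^ (x - 1) * (1 - p) else 0)
    (hN₂pmf : ∀ x : ℕ,
      (ℙ {ω | N₂ ω = x}).toReal = if 1 ≤ x then p ^ (x - 1) * (1 - p) else 0)
    (hindep : iIndepFun (m := fun _ => Real.measurableSpace)
      ![T₂, fun ω => (N₁ ω : ℝ), fun ω => (N₂ ω : ℝ)] ℙ)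
    (T : Ω → ℝ) (hT : ∀ ω, T ω = ℓt / μ + T₂ ω + τ * ((N₁ ω : ℝ) + (N₂ ω : ℝ))) :
    ∀ t : ℝ,
      (ℙ {ω | T ω ≤ t}).toReal =
        ∑' ν : ℕ, (if 2 ≤ ν then
          ((ν : ℝ) - 1) * (1 - p) ^ 2 * p ^ (ν - 2) *
            max 0 (1 - Real.exp (-(α * μ / ℓt) * (t - ℓt / μ - τ * ν)))
          else 0) ∧
      ∫ ω, Set.indicator {ω' | T ω' ≤ t} (fun _ => ℓt) ω ∂ℙ =
        ∑' ν : ℕ, (if 2 ≤ ν then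
          ((ν : ℝ) - 1) * (1 - p) ^ 2 * p ^ (ν - 2) *
            max 0 (ℓt * (1 - Real.exp (-(α * μ / ℓt) * (t - ℓt / μ - τ * ν))))
          else 0) := by
  intro t
  set γ : ℝ := α * μ / ℓt with hγdef
  have hγ : 0 < γ := by positivity
  set s : ℕ → ℝ := fun ν => t - ℓt / μ - τ * ν with hs
  -- the decomposing events
  set E : ℕ × ℕ → Set Ω :=
    fun q => {ω | N₁ ω = q.1 ∧ N₂ ω = q.2 ∧ T₂ ω ≤ s (q.1 + q.2)} with hE
  have hset : {ω | T ω ≤ t} = ⋃ q : ℕ × ℕ, E q := by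
    ext ω
    simp only [Set.mem_setOf_eq, Set.mem_iUnion, hE]
    constructor
    · intro h
      refine ⟨(N₁ ω, N₂ ω), rfl, rfl, ?_⟩
      rw [hT ω] at h
      simp only [hs]
      push_cast
      linarith
    · rintro ⟨q, h1, h2, h3⟩
      rw [hT ω]
      simp only [hs, ← h1, ← h2] at h3
      push_cast at h3
      linarith
  have hEmeas : ∀ q : ℕ × ℕ, MeasurableSet (E q) := by
    intro q
    exact (hN₁meas (measurableSet_singleton q.1)).inter
      ((hN₂meas (measurableSet_singleton q.2)).inter (hT₂meas measurableSet_Iic))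
  have hdisj : Pairwise (Function.onFun Disjoint E) := by
    intro q r hqr
    rw [Function.onFun, Set.disjoint_left]
    rintro ω ⟨h1, h2, -⟩ ⟨h1', h2', -⟩
    exact hqr (Prod.ext (h1 ▸ h1'.symm ▸ rfl) (h2 ▸ h2'.symm ▸ rfl))
  -- independence product
  have hprod : ∀ q : ℕ × ℕ, ℙ (E q) =
      ℙ {ω | T₂ ω ≤ s (q.1 + q.2)} * (ℙ {ω | N₁ ω = q.1} * ℙ {ω | N₂ ω = q.2}) := by
    intro q
    have hEA : E q = ⋂ i, ![{ω | T₂ ω ≤ s (q.1 + q.2)}, {ω | N₁ ω = q.1},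
        {ω | N₂ ω = q.2}] i := by
      ext ω
      simp [hE, Set.mem_iInter, Fin.forall_fin_succ]
      tauto
    have := hindep.meas_iInter
      (s := ![{ω | T₂ ω ≤ s (q.1 + q.2)}, {ω | N₁ ω = q.1}, {ω | N₂ ω = q.2}]) ?_
    · rw [hEA, this, Fin.prod_univ_three]
      simp only [Matrix.cons_val_zero, Matrix.cons_val_one, Matrix.head_cons,
        Matrix.cons_val_two, Matrix.tail_cons]
      rw [mul_assoc]
    · intro i
      fin_cases i
      · exact ⟨Set.Iic (s (q.1 + q.2)), measurableSet_Iic, rfl⟩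
      · refine ⟨{(q.1 : ℝ)}, measurableSet_singleton _, ?_⟩
        ext ω
        simp [Nat.cast_inj]
      · refine ⟨{(q.2 : ℝ)}, measurableSet_singleton _, ?_⟩
        ext ω
        simp [Nat.cast_inj]
  -- decompose the measure, reindex over antidiagonals
  have key : ℙ {ω | T ω ≤ t} = ∑' ν : ℕ, ∑ ab ∈ Finset.HasAntidiagonal.antidiagonal ν,
      (ℙ {ω | T₂ ω ≤ s ν} * (ℙ {ω | N₁ ω = ab.1} * ℙ {ω | N₂ ω = ab.2})) := by
    rw [hset, measure_iUnion hdisj hEmeas]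
    set G : ℕ × ℕ → ENNReal :=
      fun q => ℙ {ω | T₂ ω ≤ s (q.1 + q.2)} * (ℙ {ω | N₁ ω = q.1} * ℙ {ω | N₂ ω = q.2}) with hG
    calc ∑' q : ℕ × ℕ, ℙ (E q) = ∑' q : ℕ × ℕ, G q := tsum_congr hprod
      _ = ∑' x : (Σ ν : ℕ, Finset.HasAntidiagonal.antidiagonal ν), G (Finset.HasAntidiagonal.sigmaAntidiagonalEquivProd x) :=
          (Finset.HasAntidiagonal.sigmaAntidiagonalEquivProd.tsum_eq G).symm
      _ = ∑' ν : ℕ, ∑' ab : Finset.HasAntidiagonal.antidiagonal ν, G ab := ENNReal.tsum_sigma' _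
      _ = ∑' ν : ℕ, ∑ ab ∈ Finset.HasAntidiagonal.antidiagonal ν,
            (ℙ {ω | T₂ ω ≤ s ν} * (ℙ {ω | N₁ ω = ab.1} * ℙ {ω | N₂ ω = ab.2})) := by
          refine tsum_congr fun ν => ?_
          rw [tsum_fintype]
          rw [← Finset.sum_attach (Finset.HasAntidiagonal.antidiagonal ν)
            (fun ab => ℙ {ω | T₂ ω ≤ s ν} * (ℙ {ω | N₁ ω = ab.1} * ℙ {ω | N₂ ω = ab.2}))]
          refine Finset.sum_congr rfl fun ab _ => ?_
          have hab : (ab : ℕ × ℕ).1 + (ab : ℕ × ℕ).2 = ν := Finset.HasAntidiagonal.mem_antidiagonal.mp ab.2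
          rw [hG]
          simp only [hab]
  -- first conjunct, real version
  have hterm_ne : ∀ (ν : ℕ) (ab : ℕ × ℕ),
      ℙ {ω | T₂ ω ≤ s ν} * (ℙ {ω | N₁ ω = ab.1} * ℙ {ω | N₂ ω = ab.2}) ≠ ⊤ :=
    fun ν ab => ENNReal.mul_ne_top (measure_ne_top _ _)
      (ENNReal.mul_ne_top (measure_ne_top _ _) (measure_ne_top _ _))
  have hmax : ∀ ν : ℕ, (ℙ {ω | T₂ ω ≤ s ν}).toReal = max 0 (1 - Real.exp (-γ * s ν)) := by
    intro ν
    rw [hT₂cdf]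
    rcases le_or_gt 0 (s ν) with h | h
    · rw [if_pos h, max_eq_right]
      have : Real.exp (-γ * s ν) ≤ 1 := by
        rw [← Real.exp_zero]
        apply Real.exp_le_exp.mpr
        nlinarith
      linarith
    · rw [if_neg (not_le.mpr h), max_eq_left]
      have : 1 < Real.exp (-γ * s ν) := by
        rw [← Real.exp_zero]
        apply Real.exp_lt_exp.mpr
        nlinarith
      linarith
  have cdf_eq : (ℙ {ω | T ω ≤ t}).toReal =
      ∑' ν : ℕ, (if 2 ≤ ν then
        ((ν : ℝ) - 1) * (1 - p) ^ 2 * p ^ (ν - 2) *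
          max 0 (1 - Real.exp (-(α * μ / ℓt) * (t - ℓt / μ - τ * ν)))
        else 0) := by
    rw [key, ENNReal.tsum_toReal_eq (fun ν => ENNReal.sum_ne_top.mpr fun ab _ => hterm_ne ν ab)]
    refine tsum_congr fun ν => ?_
    rw [ENNReal.toReal_sum (fun ab _ => hterm_ne ν ab)]
    have : ∑ ab ∈ Finset.HasAntidiagonal.antidiagonal ν,
        (ℙ {ω | T₂ ω ≤ s ν} * (ℙ {ω | N₁ ω = ab.1} * ℙ {ω | N₂ ω = ab.2})).toReal =
        (ℙ {ω | T₂ ω ≤ s ν}).toReal * (((ν - 1 : ℕ) : ℝ) * ((1 - p) ^ 2 * p ^ (ν - 2))) := by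
      rw [← antidiag_sum p ν, Finset.mul_sum]
      refine Finset.sum_congr rfl fun ab _ => ?_
      rw [ENNReal.toReal_mul, ENNReal.toReal_mul, hN₁pmf, hN₂pmf]
    rw [this, hmax]
    rcases le_or_gt 2 ν with h2 | h2
    · rw [if_pos h2]
      have : ((ν - 1 : ℕ) : ℝ) = (ν : ℝ) - 1 := by
        push_cast [Nat.cast_sub (by omega : 1 ≤ ν)]; ring
      rw [this]
      simp only [hs, hγdef]
      ring
    · rw [if_neg (not_le.mpr h2)]
      have : (ν - 1 : ℕ) = 0 := by omega
      rw [this]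
      simp
  refine ⟨cdf_eq, ?_⟩
  -- second conjunct
  have hTm : Measurable T := by
    have : T = fun ω => ℓt / μ + T₂ ω + τ * ((N₁ ω : ℝ) + (N₂ ω : ℝ)) := funext hT
    rw [this]
    exact ((measurable_const.add hT₂meas).add
      (measurable_const.mul ((measurable_from_top.comp hN₁meas).add (measurable_from_top.comp hN₂meas))))
  have hTset : MeasurableSet {ω | T ω ≤ t} := measurableSet_le hTm measurable_const
  rw [MeasureTheory.integral_indicator_const ℓt hTset, smul_eq_mul, measureReal_def, cdf_eq, ← tsum_mul_right]
  refine tsum_congr fun ν => ?_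
  rcases le_or_gt 2 ν with h2 | h2
  · rw [if_pos h2, if_pos h2]
    rw [show max 0 (ℓt * (1 - Real.exp (-(α * μ / ℓt) * (t - ℓt / μ - τ * ν)))) =
        ℓt * max 0 (1 - Real.exp (-(α * μ / ℓt) * (t - ℓt / μ - τ * ν))) by
      rw [mul_max_of_nonneg _ _ hℓ.le, mul_zero]]
    ring
  · rw [if_neg (not_le.mpr h2), if_neg (not_le.mpr h2), zero_mul]
end

section
/- For fixed parameters α > 0, μ > 0, τ > 0, an integer ν ≥ 2 and a real t with t ≠ τν, the function ℓ ↦ f_ν(t; ℓ) = ℓ(1 − exp(−(αμ/ℓ)(t − ℓ/μ − τν))) is strictly concave on the open interval (0, ∞); moreover, for every ℓ > 0 with ℓ ≥ μ(t − τν), one has f_ν(t; ℓ) ≤ 0. -/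
open Real

private lemma strictConcaveOn_congr' {s : Set ℝ} {f g : ℝ → ℝ}
    (hg : StrictConcaveOn ℝ s g) (h : ∀ x ∈ s, f x = g x) : StrictConcaveOn ℝ s f := by
  refine ⟨hg.1, fun x hx y hy hxy a b ha hb hab => ?_⟩
  rw [h x hx, h y hy, h _ (hg.1 hx hy ha.le hb.le hab)]
  exact hg.2 hx hy hxy ha hb hab

/-- For fixed parameters `α, μ, τ > 0`, an integer `ν ≥ 2` and a real `t` with
`t ≠ τ * ν`, the function `ℓ ↦ f_ν(t; ℓ) = ℓ * (1 - exp (-(α*μ/ℓ) * (t - ℓ/μ - τ*ν)))` is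
strictly concave on `(0, ∞)`; moreover, for every `ℓ > 0` with `ℓ ≥ μ * (t - τ*ν)`, one has
`f_ν(t; ℓ) ≤ 0`. -/
theorem strictConcaveOn_expected_return_piece
    (α μ τ : ℝ) (hα : 0 < α) (hμ : 0 < μ) (hτ : 0 < τ)
    (ν : ℕ) (hν : 2 ≤ ν) (t : ℝ) (ht : t ≠ τ * ν) :
    StrictConcaveOn ℝ (Set.Ioi (0 : ℝ))
      (fun ℓ : ℝ => ℓ * (1 - Real.exp (-(α * μ / ℓ) * (t - ℓ / μ - τ * ν)))) ∧
    ∀ ℓ : ℝ, 0 < ℓ → μ * (t - τ * ν) ≤ ℓ →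
      ℓ * (1 - Real.exp (-(α * μ / ℓ) * (t - ℓ / μ - τ * ν))) ≤ 0 := by
  set c : ℝ := α * μ * (t - τ * ν) with hc
  have hcne : c ≠ 0 := by
    have : t - τ * ν ≠ 0 := sub_ne_zero.mpr ht
    positivity
  set G : ℝ → ℝ := fun x => x - Real.exp α * (x * Real.exp (-c / x)) with hG
  set G1 : ℝ → ℝ := fun x => 1 - Real.exp α * (Real.exp (-c / x) * (1 + c / x)) with hG1
  -- derivative of -c/x
  have hu : ∀ x : ℝ, x ≠ 0 → HasDerivAt (fun y : ℝ => -c / y) (c / x ^ 2) x := by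
    intro x hx
    have := (hasDerivAt_inv hx).const_mul (-c)
    convert this using 1
    · rfl
    · rfl
    · funext y; ring
    · field_simp
  have hGd : ∀ x : ℝ, x ≠ 0 → HasDerivAt G (G1 x) x := by
    intro x hx
    have h2 : HasDerivAt (fun y : ℝ => Real.exp (-c / y)) (Real.exp (-c / x) * (c / x ^ 2)) x :=
      (hu x hx).exp
    have h3 := (hasDerivAt_id x).mul h2
    have h4 := (h3.const_mul (Real.exp α))
    have h5 := (hasDerivAt_id x).sub h4
    convert h5 using 1
    · rfl
    · rfl
    · rfl
    simp only [hG1, id]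
    field_simp
  have hG1d : ∀ x : ℝ, x ≠ 0 →
      HasDerivAt G1 (-(Real.exp α * Real.exp (-c / x) * c ^ 2 / x ^ 3)) x := by
    intro x hx
    have h2 : HasDerivAt (fun y : ℝ => Real.exp (-c / y)) (Real.exp (-c / x) * (c / x ^ 2)) x :=
      (hu x hx).exp
    have h4 : HasDerivAt (fun y : ℝ => 1 + c / y) (-(c / x ^ 2)) x := by
      have := (hasDerivAt_inv hx).const_mul c
      have := this.const_add (1 : ℝ)
      convert this using 1
      · rfl
      · rfl
      · funext y; ring
      · field_simp
    have h5 := h2.mul h4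
    have h6 := (h5.const_mul (Real.exp α))
    have h7 := (hasDerivAt_const x (1 : ℝ)).sub h6
    convert h7 using 1
    · rfl
    · rfl
    · rfl
    field_simp
    ring
  have hGconc : StrictConcaveOn ℝ (Set.Ioi (0 : ℝ)) G := by
    apply strictConcaveOn_of_deriv2_neg (convex_Ioi 0)
    · exact fun x hx => ((hGd x (ne_of_gt hx)).continuousAt).continuousWithinAt
    · intro x hx
      rw [interior_Ioi] at hx
      have hx0 : x ≠ 0 := ne_of_gt hx
      have hder : deriv G =ᶠ[nhds x] G1 := by
        filter_upwards [isOpen_Ioi.eventually_mem hx] with y hy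
        exact (hGd y (ne_of_gt hy)).deriv
      have : deriv^[2] G x = deriv G1 x := by
        simp only [Function.iterate_succ, Function.iterate_zero, Function.comp_apply, id]
        exact hder.deriv_eq
      rw [this, (hG1d x hx0).deriv]
      have hxx : (0:ℝ) < x := hx
      have : 0 < Real.exp α * Real.exp (-c / x) * c ^ 2 / x ^ 3 := by positivity
      linarith
  constructor
  · apply strictConcaveOn_congr' hGconc
    intro x hx
    have hx0 : x ≠ 0 := ne_of_gt hx
    have hexp : Real.exp (-(α * μ / x) * (t - x / μ - τ * ν)) = Real.exp α * Real.exp (-c / x) := by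
      rw [← Real.exp_add]
      congr 1
      field_simp
      ring
    simp only [hG, hexp]
    ring
  · intro ℓ hℓ hle
    have h1 : t - ℓ / μ - τ * ν ≤ 0 := by
      rw [sub_nonpos]
      have : t - τ * ν ≤ ℓ / μ := by
        rw [le_div_iff₀ hμ]
        linarith [hle]
      linarith
    have h2 : 0 ≤ -(α * μ / ℓ) * (t - ℓ / μ - τ * ν) := by
      have hpos : 0 < α * μ / ℓ := by positivity
      nlinarith
    have h3 : 1 ≤ Real.exp (-(α * μ / ℓ) * (t - ℓ / μ - τ * ν)) := Real.one_le_exp h2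
    have h4 : 1 - Real.exp (-(α * μ / ℓ) * (t - ℓ / μ - τ * ν)) ≤ 0 := by linarith
    exact mul_nonpos_of_nonneg_of_nonpos hℓ.le h4
end

section
/- Fix parameters α > 0, μ > 0, τ > 0, p ∈ [0,1), and a real t > 0. For each integer ν ≥ 2 with μ(t − τν) > 0, on the open interval I_ν = (max(0, μ(t − τ(ν+1))), μ(t − τν)) the expected-return function E(ℓ) = Σ_{ν'=2}^{∞} h_{ν'} · max(0, f_{ν'}(t; ℓ)) coincides with the finite sum Σ_{ν'=2}^{ν} h_{ν'} f_{ν'}(t; ℓ) and is strictly concave on I_ν; hence E is piece-wise concave in ℓ with intervals of concavity delimited by the points μ(t − τν). -/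
open Real

set_option maxHeartbeats 1000000

private lemma strictConcaveOn_congr'_s4 {s : Set ℝ} {F G : ℝ → ℝ}
    (hF : StrictConcaveOn ℝ s F) (heq : ∀ x ∈ s, F x = G x) : StrictConcaveOn ℝ s G := by
  refine ⟨hF.1, fun x hx y hy hxy a b ha hb hab => ?_⟩
  have hm : a • x + b • y ∈ s := hF.1 hx hy ha.le hb.le hab
  rw [← heq x hx, ← heq y hy, ← heq _ hm]
  exact hF.2 hx hy hxy ha hb hab

private lemma strictConcaveOn_smul' {s : Set ℝ} {c : ℝ} (hc : 0 < c) {F : ℝ → ℝ}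
    (hF : StrictConcaveOn ℝ s F) : StrictConcaveOn ℝ s (fun x => c * F x) := by
  refine ⟨hF.1, fun x hx y hy hxy a b ha hb hab => ?_⟩
  have h1 := hF.2 hx hy hxy ha hb hab
  simp only [smul_eq_mul] at h1 ⊢
  nlinarith [mul_lt_mul_of_pos_left h1 hc]

private lemma concaveOn_sum' {s : Set ℝ} (hs : Convex ℝ s) {ι : Type*} (T : Finset ι)
    {F : ι → ℝ → ℝ} (hF : ∀ i ∈ T, ConcaveOn ℝ s (F i)) :
    ConcaveOn ℝ s (fun x => ∑ i ∈ T, F i x) := by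
  classical
  induction T using Finset.induction with
  | empty => simpa using concaveOn_const 0 hs
  | @insert j T hj ih =>
    simp only [Finset.sum_insert hj]
    exact (hF _ (Finset.mem_insert_self _ _)).add
      (ih fun i hi => hF i (Finset.mem_insert_of_mem hi))

private lemma key_strictConvexOn {c a b : ℝ} (hc : 0 < c) (ha : 0 ≤ a) :
    StrictConvexOn ℝ (Set.Ioo a b) (fun x : ℝ => x * Real.exp (-c / x)) := by
  have d1 : ∀ x : ℝ, x ≠ 0 → HasDerivAt (fun y : ℝ => y * Real.exp (-c / y))
      (Real.exp (-c / x) * (1 + c / x)) x := by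
    intro x hx
    have hinner : HasDerivAt (fun y : ℝ => -c / y) (c / x ^ 2) x := by
      have h1 := (hasDerivAt_inv hx).const_mul (-c)
      have he : (fun y : ℝ => -c * y⁻¹) = fun y : ℝ => -c / y := by
        funext y; ring
      rw [he] at h1
      refine h1.congr_deriv ?_
      field_simp
    have hexp := hinner.exp
    have hmul := (hasDerivAt_id' x).mul hexp
    refine hmul.congr_deriv ?_
    field_simp
  have d2 : ∀ x : ℝ, x ≠ 0 → HasDerivAt (fun y : ℝ => Real.exp (-c / y) * (1 + c / y))
      (Real.exp (-c / x) * (c ^ 2 / x ^ 3)) x := by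
    intro x hx
    have hinner : HasDerivAt (fun y : ℝ => -c / y) (c / x ^ 2) x := by
      have h1 := (hasDerivAt_inv hx).const_mul (-c)
      have he : (fun y : ℝ => -c * y⁻¹) = fun y : ℝ => -c / y := by
        funext y; ring
      rw [he] at h1
      refine h1.congr_deriv ?_
      field_simp
    have hexp := hinner.exp
    have hlin : HasDerivAt (fun y : ℝ => 1 + c / y) (-(c / x ^ 2)) x := by
      have h1 := ((hasDerivAt_inv hx).const_mul c).const_add 1
      have he : (fun y : ℝ => 1 + c * y⁻¹) = fun y : ℝ => 1 + c / y := by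
        funext y; ring
      rw [he] at h1
      refine h1.congr_deriv ?_
      field_simp
    have hmul := hexp.mul hlin
    refine hmul.congr_deriv ?_
    field_simp
    ring
  apply strictConvexOn_of_deriv2_pos (convex_Ioo a b)
  · apply ContinuousOn.mul continuousOn_id
    apply Real.continuous_exp.comp_continuousOn
    exact ContinuousOn.div continuousOn_const continuousOn_id
      (fun x hx => ne_of_gt (lt_of_le_of_lt ha hx.1))
  · intro x hx
    rw [interior_Ioo] at hx
    have hx0 : 0 < x := lt_of_le_of_lt ha hx.1
    have hev : deriv (fun y : ℝ => y * Real.exp (-c / y)) =ᶠ[nhds x]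
        (fun y : ℝ => Real.exp (-c / y) * (1 + c / y)) := by
      refine Filter.eventuallyEq_of_mem (Ioi_mem_nhds hx0) (fun y hy => ?_)
      exact (d1 y (ne_of_gt hy)).deriv
    have h2 : deriv^[2] (fun y : ℝ => y * Real.exp (-c / y)) x
        = Real.exp (-c / x) * (c ^ 2 / x ^ 3) := by
      show deriv (deriv (fun y : ℝ => y * Real.exp (-c / y))) x = _
      rw [hev.deriv_eq]
      exact (d2 x (ne_of_gt hx0)).deriv
    rw [h2]
    have : 0 < c ^ 2 / x ^ 3 := by positivity
    positivity

/-- Fix `α, μ, τ > 0`, `p ∈ [0,1)`, and `t > 0`. With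
`f ν ℓ = ℓ * (1 - exp (-(α*μ/ℓ) * (t - ℓ/μ - τ*ν)))`, `h ν = (ν-1) * (1-p)^2 * p^(ν-2)` and the
expected-return function `E ℓ = Σ'_{ν' ≥ 2} h ν' * max 0 (f ν' ℓ)`, for each integer `ν ≥ 2`
with `μ * (t - τ*ν) > 0`, on the open interval
`I_ν = (max 0 (μ * (t - τ*(ν+1))), μ * (t - τ*ν))` the function `E` coincides with the finite
sum `Σ_{ν'=2}^{ν} h ν' * f ν' ℓ` and is strictly concave on `I_ν`; hence `E` is piece-wise
concave in `ℓ` with intervals of concavity delimited by the points `μ * (t - τ*ν)`. -/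
theorem expected_return_piecewise_concave
    (α μ τ p t : ℝ) (hα : 0 < α) (hμ : 0 < μ) (hτ : 0 < τ)
    (hp0 : 0 ≤ p) (hp1 : p < 1) (ht : 0 < t)
    (f : ℕ → ℝ → ℝ)
    (hf : ∀ (ν : ℕ) (ℓ : ℝ),
      f ν ℓ = ℓ * (1 - Real.exp (-(α * μ / ℓ) * (t - ℓ / μ - τ * ν))))
    (h : ℕ → ℝ) (hh : ∀ ν : ℕ, h ν = ((ν : ℝ) - 1) * (1 - p) ^ 2 * p ^ (ν - 2))
    (E : ℝ → ℝ)
    (hE : ∀ ℓ : ℝ, E ℓ = ∑' ν' : ℕ, if 2 ≤ ν' then h ν' * max 0 (f ν' ℓ) else 0) :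
    ∀ ν : ℕ, 2 ≤ ν → 0 < μ * (t - τ * ν) →
      (∀ ℓ ∈ Set.Ioo (max 0 (μ * (t - τ * (ν + 1)))) (μ * (t - τ * ν)),
        E ℓ = ∑ ν' ∈ Finset.Icc 2 ν, h ν' * f ν' ℓ) ∧
      StrictConcaveOn ℝ
        (Set.Ioo (max 0 (μ * (t - τ * (ν + 1)))) (μ * (t - τ * ν))) E := by
  intro ν hν hb
  set a : ℝ := max 0 (μ * (t - τ * (ν + 1))) with ha_def
  set b : ℝ := μ * (t - τ * ν) with hb_def
  have ha0 : 0 ≤ a := le_max_left _ _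
  have ht' : 0 < t - τ * ν := by
    by_contra hcon
    push_neg at hcon
    nlinarith
  -- Part 1 : pointwise identity
  have part1 : ∀ ℓ ∈ Set.Ioo a b, E ℓ = ∑ ν' ∈ Finset.Icc 2 ν, h ν' * f ν' ℓ := by
    intro ℓ hℓ
    obtain ⟨hℓa, hℓb⟩ := hℓ
    have hℓ0 : 0 < ℓ := lt_of_le_of_lt ha0 hℓa
    have hdiv : ℓ / μ < t - τ * ν := by
      rw [div_lt_iff₀ hμ]
      nlinarith
    rw [hE ℓ]
    rw [tsum_eq_sum (s := Finset.Icc 2 ν) ?_]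
    · refine Finset.sum_congr rfl (fun ν' hν' => ?_)
      rw [Finset.mem_Icc] at hν'
      rw [if_pos hν'.1]
      congr 1
      have hcast : (ν' : ℝ) ≤ (ν : ℝ) := Nat.cast_le.2 hν'.2
      have hpos : 0 < t - ℓ / μ - τ * ν' := by nlinarith
      have harg : -(α * μ / ℓ) * (t - ℓ / μ - τ * ν') < 0 := by
        have h1 : 0 < (α * μ / ℓ) * (t - ℓ / μ - τ * ν') :=
          mul_pos (div_pos (mul_pos hα hμ) hℓ0) hpos
        nlinarith
      have hfpos : 0 ≤ f ν' ℓ := by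
        rw [hf]
        have := Real.exp_lt_one_iff.2 harg
        nlinarith
      exact max_eq_right hfpos
    · intro ν' hν'
      by_cases h2 : 2 ≤ ν'
      · rw [if_pos h2]
        have hgt : ν + 1 ≤ ν' := by
          rw [Finset.mem_Icc] at hν'
          omega
        have hcast : (ν : ℝ) + 1 ≤ (ν' : ℝ) := by exact_mod_cast hgt
        have hℓa' : μ * (t - τ * (ν + 1)) < ℓ := lt_of_le_of_lt (le_max_right _ _) hℓa
        have hdiv2 : t - τ * (ν + 1) < ℓ / μ := by
          rw [lt_div_iff₀ hμ]
          nlinarith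
        have hneg : t - ℓ / μ - τ * ν' < 0 := by nlinarith
        have harg : 0 < -(α * μ / ℓ) * (t - ℓ / μ - τ * ν') := by
          have h1 : (α * μ / ℓ) * (t - ℓ / μ - τ * ν') < 0 :=
            mul_neg_of_pos_of_neg (div_pos (mul_pos hα hμ) hℓ0) hneg
          nlinarith
        have hfneg : f ν' ℓ ≤ 0 := by
          rw [hf]
          
          nlinarith [Real.one_lt_exp_iff.2 harg]
        rw [max_eq_left hfneg, mul_zero]
      · rw [if_neg h2]
  refine ⟨part1, ?_⟩
  -- Part 2 : strict concavity
  have hsconv : Convex ℝ (Set.Ioo a b) := convex_Ioo a b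
  -- strict concavity of each f ν' on the interval
  have hSC : ∀ ν' ∈ Finset.Icc 2 ν, StrictConcaveOn ℝ (Set.Ioo a b) (f ν') := by
    intro ν' hν'
    rw [Finset.mem_Icc] at hν'
    have hcast : (ν' : ℝ) ≤ (ν : ℝ) := Nat.cast_le.2 hν'.2
    have hc' : 0 < α * μ * (t - τ * ν') := by
      apply mul_pos (mul_pos hα hμ)
      nlinarith
    have key := key_strictConvexOn (b := b) hc' ha0
    -- f ν' = x - exp α * (x * exp (-c'/x)) on the interval
    have hFeq : ∀ x ∈ Set.Ioo a b,
        (fun x => x - Real.exp α * (x * Real.exp (-(α * μ * (t - τ * ν')) / x))) x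
          = f ν' x := by
      intro x hx
      have hx0 : 0 < x := lt_of_le_of_lt ha0 hx.1
      rw [hf]
      have harg : -(α * μ / x) * (t - x / μ - τ * ν')
          = α + -(α * μ * (t - τ * ν')) / x := by
        field_simp
        ring
      rw [harg, Real.exp_add]
      ring
    refine strictConcaveOn_congr'_s4 ?_ hFeq
    refine ⟨hsconv, fun x hx y hy hxy c d hcpos hdpos hcd => ?_⟩
    have h1 := key.2 hx hy hxy hcpos hdpos hcd
    simp only [smul_eq_mul] at h1 ⊢
    nlinarith [mul_lt_mul_of_pos_left h1 (Real.exp_pos α)]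
  have hterm : ∀ ν' ∈ Finset.Icc 2 ν,
      ConcaveOn ℝ (Set.Ioo a b) (fun x => h ν' * f ν' x) := by
    intro ν' hν'
    have hmem := hν'
    rw [Finset.mem_Icc] at hmem
    have hh0 : 0 ≤ h ν' := by
      rw [hh]
      have h1 : (1 : ℝ) ≤ (ν' : ℝ) := by exact_mod_cast le_trans one_le_two hmem.1
      exact mul_nonneg (mul_nonneg (by linarith) (sq_nonneg _)) (pow_nonneg hp0 _)
    have := (hSC ν' hν').concaveOn.smul hh0
    simpa using this
  have h2pos : 0 < h 2 := by
    have he : h 2 = (1 - p) ^ 2 := by rw [hh]; norm_num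
    rw [he]
    have : 0 < 1 - p := by linarith
    positivity
  have hterm2 : StrictConcaveOn ℝ (Set.Ioo a b) (fun x => h 2 * f 2 x) :=
    strictConcaveOn_smul' h2pos (hSC 2 (by rw [Finset.mem_Icc]; omega))
  have hins : Finset.Icc 2 ν = insert 2 (Finset.Icc 3 ν) := by
    ext k
    simp only [Finset.mem_Icc, Finset.mem_insert]
    omega
  have hrest : ConcaveOn ℝ (Set.Ioo a b) (fun x => ∑ ν' ∈ Finset.Icc 3 ν, h ν' * f ν' x) :=
    concaveOn_sum' hsconv _ (fun i hi => hterm i (by rw [hins]; exact Finset.mem_insert_of_mem hi))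
  have hG : StrictConcaveOn ℝ (Set.Ioo a b)
      (fun x => ∑ ν' ∈ Finset.Icc 2 ν, h ν' * f ν' x) := by
    refine strictConcaveOn_congr'_s4 (hterm2.add_concaveOn hrest) (fun x _ => ?_)
    simp only [Pi.add_apply]
    rw [hins, Finset.sum_insert (by simp)]
  exact strictConcaveOn_congr'_s4 hG (fun x hx => (part1 x hx).symm)
end

section
/- Fix parameters α > 0, μ > 0, τ > 0 and a real t > 2τ. Let w be the unique positive solution of (1 + w)e^{−w} = e^{−α} and set s = αμ/w. Then ℓ* = s(t − 2τ) satisfies 0 < ℓ* < μ(t − 2τ), and ℓ* is the unique global maximizer over ℓ ∈ (0, ∞) of the function g(ℓ) = ℓ(1 − exp(−(αμ/ℓ)(t − ℓ/μ − 2τ))), with g(ℓ*) > 0. -/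
open Real

/-- Fix `α, μ, τ > 0` and `t > 2τ`. Let `w` be the unique positive solution of
`(1 + w) * exp (-w) = exp (-α)` and set `s = α * μ / w`. Then `ℓ* = s * (t - 2τ)` satisfies
`0 < ℓ* < μ * (t - 2τ)`, and `ℓ*` is the unique global maximizer over `ℓ ∈ (0, ∞)` of the
function `g ℓ = ℓ * (1 - exp (-(α*μ/ℓ) * (t - ℓ/μ - 2τ)))`, with `g ℓ* > 0`. -/
theorem awgn_unique_maximizer
    (α μ τ t : ℝ) (hα : 0 < α) (hμ : 0 < μ) (hτ : 0 < τ) (ht : 2 * τ < t)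
    (w : ℝ) (hw : 0 < w) (hweq : (1 + w) * Real.exp (-w) = Real.exp (-α))
    (s : ℝ) (hs : s = α * μ / w)
    (g : ℝ → ℝ)
    (hg : ∀ ℓ : ℝ, g ℓ = ℓ * (1 - Real.exp (-(α * μ / ℓ) * (t - ℓ / μ - 2 * τ)))) :
    0 < s * (t - 2 * τ) ∧ s * (t - 2 * τ) < μ * (t - 2 * τ) ∧
    (∀ ℓ : ℝ, 0 < ℓ → ℓ ≠ s * (t - 2 * τ) → g ℓ < g (s * (t - 2 * τ))) ∧
    0 < g (s * (t - 2 * τ)) := by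
  have hT : 0 < t - 2 * τ := by linarith
  have h1w : (0:ℝ) < 1 + w := by linarith
  have hwα : α < w := by
    have h1 : Real.exp (-w) < (1 + w) * Real.exp (-w) := by
      nlinarith [Real.exp_pos (-w)]
    rw [hweq] at h1
    have := Real.exp_lt_exp.mp h1; linarith
  have hspos : 0 < s := by rw [hs]; positivity
  have hkey : (1 + w) * Real.exp α = Real.exp w := by
    have h := hweq
    rw [Real.exp_neg, Real.exp_neg] at h
    have hew := Real.exp_pos w
    have hea := Real.exp_pos α
    field_simp at h
    nlinarith [h]
  -- value of g at positive points
  have gval : ∀ ℓ : ℝ, 0 < ℓ →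
      g ℓ = ℓ - ℓ * Real.exp (w - α * μ * (t - 2 * τ) / ℓ) / (1 + w) := by
    intro ℓ hℓ
    rw [hg]
    have hexp : -(α * μ / ℓ) * (t - ℓ / μ - 2 * τ) = α - α * μ * (t - 2 * τ) / ℓ := by
      field_simp
      ring
    rw [hexp]
    have h2 : Real.exp (α - α * μ * (t - 2 * τ) / ℓ)
        = Real.exp (w - α * μ * (t - 2 * τ) / ℓ) / (1 + w) := by
      rw [Real.exp_sub, Real.exp_sub, ← hkey]
      field_simp
    rw [h2]; ring
  have hLpos : 0 < s * (t - 2 * τ) := mul_pos hspos hT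
  have hxL : α * μ * (t - 2 * τ) / (s * (t - 2 * τ)) = w := by
    rw [hs]
    field_simp
  have hgL : g (s * (t - 2 * τ)) = α * μ * (t - 2 * τ) / (1 + w) := by
    rw [gval _ hLpos, hxL, sub_self, Real.exp_zero, hs]
    field_simp
    ring
  refine ⟨hLpos, ?_, ?_, ?_⟩
  · have : s < μ := by
      rw [hs, div_lt_iff₀ hw]
      nlinarith
    nlinarith
  · intro ℓ hℓ hne
    set x := α * μ * (t - 2 * τ) / ℓ with hxdef
    have hℓx : ℓ * x = α * μ * (t - 2 * τ) := by
      rw [hxdef]; field_simp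
    have hxw : x ≠ w := by
      intro hxw
      apply hne
      rw [hxw] at hℓx
      rw [hs]
      field_simp
      linarith [hℓx]
    have hexpgt : w - x + 1 < Real.exp (w - x) := by
      have hne0 : w - x ≠ 0 := sub_ne_zero.mpr (Ne.symm hxw)
      exact Real.add_one_lt_exp hne0
    have hgl := gval ℓ hℓ
    rw [hgl, hgL]
    rw [← hxdef]
    have h3 : ℓ * (w - x + 1) < ℓ * Real.exp (w - x) :=
      (mul_lt_mul_iff_right₀ hℓ).mpr hexpgt
    rw [← hℓx, lt_div_iff₀ h1w]
    have h4 : (ℓ - ℓ * Real.exp (w - x) / (1 + w)) * (1 + w)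
        = ℓ * (1 + w) - ℓ * Real.exp (w - x) := by
      field_simp
    rw [h4]
    nlinarith [h3]
  · rw [hgL]; positivity
end

section
/- Fix parameters α > 0, μ > 0, τ > 0, a maximum load ℓ_max > 0, and a real t > 2τ. Let w be the unique positive solution of (1 + w)e^{−w} = e^{−α} and set s = αμ/w. Define G(ℓ) = max(0, ℓ(1 − exp(−(αμ/ℓ)(t − ℓ/μ − 2τ)))) for ℓ ∈ (0, ℓ_max] and G(0) = 0. Then the unique maximizer of G over [0, ℓ_max] is ℓ*(t) = min(s(t − 2τ), ℓ_max); in particular ℓ*(t) = s(t − 2τ) when 2τ < t ≤ ℓ_max/s + 2τ and ℓ*(t) = ℓ_max when t > ℓ_max/s + 2τ. -/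
open Real

lemma gdec_aux {a b : ℝ} (ha : 0 ≤ a) (hab : a < b) :
    (1 + b) * Real.exp (-b) < (1 + a) * Real.exp (-a) := by
  have h1 : b - a + 1 < Real.exp (b - a) := Real.add_one_lt_exp (by linarith)
  have h2 : (1 + b) < (1 + a) * Real.exp (b - a) := by
    nlinarith [Real.exp_pos (b - a)]
  have h3 : (0:ℝ) < Real.exp (-b) := Real.exp_pos _
  calc (1 + b) * Real.exp (-b) < ((1 + a) * Real.exp (b - a)) * Real.exp (-b) := by nlinarith
    _ = (1 + a) * Real.exp (-a) := by
        rw [mul_assoc, ← Real.exp_add]; ring_nf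

/-- Fix `α, μ, τ > 0`, a maximum load `ℓ_max > 0`, and `t > 2τ`. Let `w` be the
unique positive solution of `(1 + w) * exp (-w) = exp (-α)` and `s = α * μ / w`. With
`G ℓ = max 0 (ℓ * (1 - exp (-(α*μ/ℓ) * (t - ℓ/μ - 2τ))))` for `ℓ ∈ (0, ℓ_max]` and `G 0 = 0`
(the given formula also evaluates to `0` at `ℓ = 0`), the unique maximizer of `G` over
`[0, ℓ_max]` is `ℓ*(t) = min (s * (t - 2τ)) ℓ_max`; in particular `ℓ*(t) = s * (t - 2τ)` when
`2τ < t ≤ ℓ_max / s + 2τ` and `ℓ*(t) = ℓ_max` when `t > ℓ_max / s + 2τ`. -/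
theorem awgn_unique_maximizer_bounded
    (α μ τ t ℓmax : ℝ) (hα : 0 < α) (hμ : 0 < μ) (hτ : 0 < τ) (hℓmax : 0 < ℓmax)
    (ht : 2 * τ < t)
    (w : ℝ) (hw : 0 < w) (hweq : (1 + w) * Real.exp (-w) = Real.exp (-α))
    (s : ℝ) (hs : s = α * μ / w)
    (G : ℝ → ℝ)
    (hG : ∀ ℓ : ℝ, 0 < ℓ → G ℓ = max 0 (ℓ * (1 - Real.exp (-(α * μ / ℓ) * (t - ℓ / μ - 2 * τ)))))
    (hG0 : G 0 = 0) :
    (min (s * (t - 2 * τ)) ℓmax ∈ Set.Icc (0 : ℝ) ℓmax) ∧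
    (∀ ℓ : ℝ, ℓ ∈ Set.Icc (0 : ℝ) ℓmax → ℓ ≠ min (s * (t - 2 * τ)) ℓmax →
      G ℓ < G (min (s * (t - 2 * τ)) ℓmax)) ∧
    (t ≤ ℓmax / s + 2 * τ → min (s * (t - 2 * τ)) ℓmax = s * (t - 2 * τ)) ∧
    (ℓmax / s + 2 * τ < t → min (s * (t - 2 * τ)) ℓmax = ℓmax) := by
  have hT : 0 < t - 2 * τ := by linarith
  set c : ℝ := α * μ * (t - 2 * τ) with hc_def
  have hc : 0 < c := by positivity
  set ℓ0 : ℝ := c / w with hℓ0_def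
  have hℓ0 : 0 < ℓ0 := div_pos hc hw
  have hℓ0eq : s * (t - 2 * τ) = ℓ0 := by rw [hs, hℓ0_def, hc_def]; ring
  have hspos : 0 < s := by rw [hs]; positivity
  have hcℓ0 : c / ℓ0 = w := by
    rw [hℓ0_def]; field_simp
  -- w > α
  have hwα : α < w := by
    have h1 : Real.exp (-w) < (1 + w) * Real.exp (-w) := by
      nlinarith [Real.exp_pos (-w)]
    rw [hweq] at h1
    have := Real.exp_lt_exp.mp h1
    linarith
  set F : ℝ → ℝ := fun x => x - x * Real.exp (α - c / x) with hF_def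
  -- G in terms of F
  have hGF : ∀ x : ℝ, 0 < x → G x = max 0 (F x) := by
    intro x hx
    rw [hG x hx]
    congr 1
    have hx' : x ≠ 0 := ne_of_gt hx
    have he : -(α * μ / x) * (t - x / μ - 2 * τ) = α - c / x := by
      rw [hc_def]; field_simp; ring
    rw [he, hF_def]; ring
  -- derivative
  have hder : ∀ x : ℝ, 0 < x →
      HasDerivAt F (1 - Real.exp (α - c / x) * (1 + c / x)) x := by
    intro x hx
    have hx' : x ≠ 0 := ne_of_gt hx
    have h1 : HasDerivAt (fun y : ℝ => α - c / y) (c / x ^ 2) x := by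
      have h := ((hasDerivAt_inv hx').const_mul c).const_sub α
      have heq : (fun y : ℝ => α - c * y⁻¹) = fun y : ℝ => α - c / y := by
        funext y; rw [div_eq_mul_inv]
      rw [heq] at h
      exact h.congr_deriv (by ring)
    have h2 : HasDerivAt (fun y : ℝ => Real.exp (α - c / y))
        (Real.exp (α - c / x) * (c / x ^ 2)) x := h1.exp
    have h3 : HasDerivAt (fun y : ℝ => y * Real.exp (α - c / y))
        (1 * Real.exp (α - c / x) + x * (Real.exp (α - c / x) * (c / x ^ 2))) x :=
      (hasDerivAt_id x).mul h2
    have h4 := (hasDerivAt_id x).sub h3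
    exact h4.congr_deriv (by field_simp)
  -- sign of derivative
  have hpos : ∀ x : ℝ, 0 < x → x < ℓ0 → 0 < 1 - Real.exp (α - c / x) * (1 + c / x) := by
    intro x hx hxl
    have hu : w < c / x := by
      rw [← hcℓ0]
      exact div_lt_div_of_pos_left hc hx hxl
    have hg : (1 + c / x) * Real.exp (-(c / x)) < (1 + w) * Real.exp (-w) :=
      gdec_aux (le_of_lt hw) hu
    rw [hweq] at hg
    have key : Real.exp (α - c / x) * (1 + c / x)
        = Real.exp α * ((1 + c / x) * Real.exp (-(c / x))) := by
      rw [show α - c / x = α + -(c / x) by ring, Real.exp_add]; ring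
    have h2 : Real.exp α * ((1 + c / x) * Real.exp (-(c / x)))
        < Real.exp α * Real.exp (-α) :=
      mul_lt_mul_of_pos_left hg (Real.exp_pos α)
    rw [← Real.exp_add] at h2
    simp at h2
    rw [key]; linarith
  have hneg : ∀ x : ℝ, ℓ0 < x → 1 - Real.exp (α - c / x) * (1 + c / x) < 0 := by
    intro x hxl
    have hx : 0 < x := lt_trans hℓ0 hxl
    have hu : c / x < w := by
      rw [← hcℓ0]
      exact div_lt_div_of_pos_left hc hℓ0 hxl
    have hu0 : 0 < c / x := div_pos hc hx
    have hg : (1 + w) * Real.exp (-w) < (1 + c / x) * Real.exp (-(c / x)) :=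
      gdec_aux (le_of_lt hu0) hu
    rw [hweq] at hg
    have key : Real.exp (α - c / x) * (1 + c / x)
        = Real.exp α * ((1 + c / x) * Real.exp (-(c / x))) := by
      rw [show α - c / x = α + -(c / x) by ring, Real.exp_add]; ring
    have h2 : Real.exp α * Real.exp (-α)
        < Real.exp α * ((1 + c / x) * Real.exp (-(c / x))) :=
      mul_lt_mul_of_pos_left hg (Real.exp_pos α)
    rw [← Real.exp_add] at h2
    simp at h2
    rw [key]; linarith
  -- strict monotonicity
  have hmono : StrictMonoOn F (Set.Ioc 0 ℓ0) := by
    apply strictMonoOn_of_deriv_pos (convex_Ioc 0 ℓ0)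
    · intro x hx
      exact (hder x hx.1).continuousAt.continuousWithinAt
    · intro x hx
      rw [interior_Ioc] at hx
      rw [(hder x hx.1).deriv]
      exact hpos x hx.1 hx.2
  have hanti : StrictAntiOn F (Set.Ici ℓ0) := by
    apply strictAntiOn_of_deriv_neg (convex_Ici ℓ0)
    · intro x hx
      exact (hder x (lt_of_lt_of_le hℓ0 hx)).continuousAt.continuousWithinAt
    · intro x hx
      rw [interior_Ici] at hx
      rw [(hder x (lt_trans hℓ0 hx)).deriv]
      exact hneg x hx
  -- positivity of F on (0, ℓ0]
  have hFpos : ∀ x : ℝ, 0 < x → x ≤ ℓ0 → 0 < F x := by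
    intro x hx hxl
    have hu : w ≤ c / x := by
      rw [← hcℓ0]
      exact div_le_div_of_nonneg_left (le_of_lt hc) hx hxl
    have hlt : α - c / x < 0 := by linarith
    have he : Real.exp (α - c / x) < 1 := Real.exp_lt_one_iff.mpr hlt
    rw [hF_def]
    nlinarith
  -- the maximizer
  set m : ℝ := min ℓ0 ℓmax with hm_def
  have hmmin : min (s * (t - 2 * τ)) ℓmax = m := by rw [hℓ0eq]
  have hm0 : 0 < m := lt_min hℓ0 hℓmax
  have hmℓ0 : m ≤ ℓ0 := min_le_left _ _
  have hmℓmax : m ≤ ℓmax := min_le_right _ _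
  have hFm : 0 < F m := hFpos m hm0 hmℓ0
  have hGm : G m = F m := by
    rw [hGF m hm0, max_eq_right (le_of_lt hFm)]
  rw [hmmin]
  refine ⟨⟨le_of_lt hm0, hmℓmax⟩, ?_, ?_, ?_⟩
  · intro ℓ hℓ hne
    rcases eq_or_lt_of_le hℓ.1 with h0 | hℓpos
    · rw [← h0, hG0, hGm]; exact hFm
    · have hFlt : F ℓ < F m := by
        rcases le_or_gt ℓ ℓ0 with hle | hgt
        · have hℓm : ℓ ≤ m := le_min hle hℓ.2
          have hℓm' : ℓ < m := lt_of_le_of_ne hℓm hne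
          exact hmono ⟨hℓpos, hle⟩ ⟨hm0, hmℓ0⟩ hℓm'
        · have hmeq : m = ℓ0 := min_eq_left (by linarith [hℓ.2])
          rw [hmeq]
          exact hanti (Set.self_mem_Ici) (Set.mem_Ici.mpr (le_of_lt hgt)) hgt
      rw [hGF ℓ hℓpos, hGm]
      exact max_lt hFm hFlt
  · intro hle
    have h1 : t - 2 * τ ≤ ℓmax / s := by linarith
    have h2 : s * (t - 2 * τ) ≤ ℓmax := by
      have h3 : s * (ℓmax / s) = ℓmax := by field_simp
      nlinarith [mul_le_mul_of_nonneg_left h1 hspos.le]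
    rw [hm_def, ← hℓ0eq]
    exact min_eq_left h2
  · intro hlt
    have h1 : ℓmax / s ≤ t - 2 * τ := by linarith
    have h2 : ℓmax ≤ s * (t - 2 * τ) := by
      have h3 : s * (ℓmax / s) = ℓmax := by field_simp
      nlinarith [mul_le_mul_of_nonneg_left h1 hspos.le]
    rw [hm_def, ← hℓ0eq]
    exact min_eq_right h2
end

section
/- Fix parameters α > 0, μ > 0, τ > 0 and a maximum load ℓ_max > 0. Let w be the unique positive solution of (1 + w)e^{−w} = e^{−α}, set s = αμ/w, s̃ = s(1 − exp(−α(μ/s − 1))), and ζ = ℓ_max/s + 2τ. Define G(t, ℓ) = max(0, ℓ(1 − exp(−(αμ/ℓ)(t − ℓ/μ − 2τ)))) for ℓ > 0 and G(t, 0) = 0. Then the optimized expected return satisfies: sup_{ℓ ∈ [0, ℓ_max]} G(t, ℓ) = 0 if t ≤ 2τ; = s̃(t − 2τ) if 2τ < t ≤ ζ; and = ℓ_max(1 − exp(−(αμ/ℓ_max)(t − ℓ_max/μ − 2τ))) if t > ζ. -/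
open Real

private lemma aux_anti {a b : ℝ} (ha : 0 ≤ a) (hab : a ≤ b) :
    (1 + b) * Real.exp (-b) ≤ (1 + a) * Real.exp (-a) := by
  have h := Real.add_one_le_exp (b - a)
  have e1 : Real.exp (-a) = Real.exp (-b) * Real.exp (b - a) := by
    rw [← Real.exp_add]; ring_nf
  rw [e1]
  have hb := Real.exp_pos (-b)
  nlinarith [mul_nonneg (mul_nonneg hb.le ha) (sub_nonneg.2 hab),
    mul_le_mul_of_nonneg_left h (by positivity : (0:ℝ) ≤ (1 + a) * Real.exp (-b))]

private lemma g_antitone {α w : ℝ} (hw : 0 < w)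
    (hweq : (1 + w) * Real.exp (-w) = Real.exp (-α)) :
    AntitoneOn (fun x => (1 - Real.exp (α - x)) / x) (Set.Ici w) := by
  have hderiv : ∀ x : ℝ, x ≠ 0 → HasDerivAt (fun x => (1 - Real.exp (α - x)) / x)
      (((0 - Real.exp (α - x) * (0 - 1)) * x - (1 - Real.exp (α - x)) * 1) / x ^ 2) x := by
    intro x hx
    have h1 : HasDerivAt (fun x : ℝ => α - x) (0 - 1) x :=
      (hasDerivAt_const x α).sub (hasDerivAt_id x)
    have h2 : HasDerivAt (fun x : ℝ => Real.exp (α - x)) (Real.exp (α - x) * (0 - 1)) x :=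
      h1.exp
    exact ((hasDerivAt_const x 1).sub h2).div (hasDerivAt_id x) hx
  apply antitoneOn_of_deriv_nonpos (convex_Ici w)
  · intro x hx
    exact (hderiv x (ne_of_gt (lt_of_lt_of_le hw hx))).continuousAt.continuousWithinAt
  · rw [interior_Ici]
    intro x hx
    exact (hderiv x (ne_of_gt (lt_trans hw hx))).differentiableAt.differentiableWithinAt
  · rw [interior_Ici]
    intro x hx
    have hwx : w < x := hx
    rw [(hderiv x (ne_of_gt (lt_trans hw hwx))).deriv]
    apply div_nonpos_of_nonpos_of_nonneg _ (sq_nonneg x)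
    -- need (1 + x) * exp (α - x) ≤ 1
    have h3 := aux_anti hw.le hwx.le
    rw [hweq] at h3
    have e2 : Real.exp (α - x) = Real.exp α * Real.exp (-x) := by
      rw [← Real.exp_add]; ring_nf
    have e3 : Real.exp α * Real.exp (-α) = 1 := by rw [← Real.exp_add]; simp
    nlinarith [mul_le_mul_of_nonneg_left h3 (Real.exp_pos α).le]

set_option maxHeartbeats 1000000 in
/-- Fix `α, μ, τ > 0` and `ℓ_max > 0`. Let `w` be the unique positive solution
of `(1 + w) * exp (-w) = exp (-α)`, `s = α*μ/w`, `s̃ = s * (1 - exp (-α * (μ/s - 1)))` and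
`ζ = ℓ_max / s + 2τ`. With `G t ℓ = max 0 (ℓ * (1 - exp (-(α*μ/ℓ) * (t - ℓ/μ - 2τ))))` for
`ℓ > 0` and `G t 0 = 0`, the optimized expected return `sup_{ℓ ∈ [0, ℓ_max]} G t ℓ` equals `0`
if `t ≤ 2τ`, equals `s̃ * (t - 2τ)` if `2τ < t ≤ ζ`, and equals
`ℓ_max * (1 - exp (-(α*μ/ℓ_max) * (t - ℓ_max/μ - 2τ)))` if `t > ζ`. -/
theorem awgn_optimized_expected_return_closed_form
    (α μ τ ℓmax : ℝ) (hα : 0 < α) (hμ : 0 < μ) (hτ : 0 < τ) (hℓmax : 0 < ℓmax)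
    (w : ℝ) (hw : 0 < w) (hweq : (1 + w) * Real.exp (-w) = Real.exp (-α))
    (s stilde ζ : ℝ) (hs : s = α * μ / w)
    (hstilde : stilde = s * (1 - Real.exp (-α * (μ / s - 1))))
    (hζ : ζ = ℓmax / s + 2 * τ)
    (G : ℝ → ℝ → ℝ)
    (hG : ∀ t ℓ : ℝ, 0 < ℓ →
      G t ℓ = max 0 (ℓ * (1 - Real.exp (-(α * μ / ℓ) * (t - ℓ / μ - 2 * τ)))))
    (hG0 : ∀ t : ℝ, G t 0 = 0) :
    ∀ t : ℝ,
      (t ≤ 2 * τ → sSup (G t '' Set.Icc (0 : ℝ) ℓmax) = 0) ∧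
      (2 * τ < t → t ≤ ζ → sSup (G t '' Set.Icc (0 : ℝ) ℓmax) = stilde * (t - 2 * τ)) ∧
      (ζ < t → sSup (G t '' Set.Icc (0 : ℝ) ℓmax)
          = ℓmax * (1 - Real.exp (-(α * μ / ℓmax) * (t - ℓmax / μ - 2 * τ)))) := by
  have h1w : (0:ℝ) < 1 + w := by linarith
  have hspos : 0 < s := by rw [hs]; positivity
  have e2 : ∀ x : ℝ, Real.exp (α - x) = Real.exp α * Real.exp (-x) := by
    intro x; rw [← Real.exp_add]; ring_nf
  have e3 : Real.exp α * Real.exp (-α) = 1 := by rw [← Real.exp_add]; simp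
  have h1 : (1 + w) * Real.exp (α - w) = 1 := by
    rw [e2 w]
    linear_combination Real.exp α * hweq + e3
  have hexpaw : Real.exp (α - w) = 1 / (1 + w) := by
    field_simp
    linarith [h1]
  -- w > α
  have hαw : α < w := by
    by_contra hcon
    push_neg at hcon
    have h4 : Real.exp (-α) ≤ Real.exp (-w) := Real.exp_le_exp.2 (by linarith)
    nlinarith [Real.exp_pos (-w)]
  -- stilde = α*μ/(1+w)
  have hμs : μ / s = w / α := by
    rw [hs]; field_simp
  have harg : -α * (μ / s - 1) = α - w := by
    rw [hμs]; field_simp; ring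
  have hstilde' : stilde = α * μ / (1 + w) := by
    rw [hstilde, harg, hexpaw, hs]
    field_simp
    ring
  -- key inequality for middle regime
  have key2 : ∀ x : ℝ, (1 + w) * (1 - Real.exp (α - x)) ≤ x := by
    intro x
    have h2 := Real.add_one_le_exp (w - x)
    have e4 : Real.exp (α - x) = Real.exp (α - w) * Real.exp (w - x) := by
      rw [← Real.exp_add]; congr 1; ring
    have e5 : (1 + w) * Real.exp (α - x) = Real.exp (w - x) := by
      rw [e4]; linear_combination Real.exp (w - x) * h1
    linarith [h2, e5]
  -- key inequality for last regime
  have key3 : ∀ x₀ x : ℝ, w ≤ x₀ → x₀ ≤ x →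
      x₀ * (1 - Real.exp (α - x)) ≤ x * (1 - Real.exp (α - x₀)) := by
    intro x₀ x h0 hx
    have h := g_antitone hw hweq h0 (h0.trans hx) hx
    have hx0 : 0 < x₀ := lt_of_lt_of_le hw h0
    have hxp : 0 < x := lt_of_lt_of_le hx0 hx
    rw [div_le_div_iff₀ hxp hx0] at h
    nlinarith [h]
  intro t
  have hne : (G t '' Set.Icc (0 : ℝ) ℓmax).Nonempty :=
    ⟨G t 0, Set.mem_image_of_mem _ ⟨le_refl 0, hℓmax.le⟩⟩
  have main : ∀ M : ℝ, (∃ ℓ ∈ Set.Icc (0:ℝ) ℓmax, G t ℓ = M) →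
      (∀ ℓ ∈ Set.Icc (0:ℝ) ℓmax, G t ℓ ≤ M) →
      sSup (G t '' Set.Icc (0 : ℝ) ℓmax) = M := by
    rintro M ⟨ℓ₀, hℓ₀, hGℓ₀⟩ hub
    apply le_antisymm
    · apply csSup_le hne
      rintro y ⟨ℓ, hℓ, rfl⟩
      exact hub ℓ hℓ
    · rw [← hGℓ₀]
      apply le_csSup
      · exact ⟨M, by rintro y ⟨ℓ, hℓ, rfl⟩; exact hub ℓ hℓ⟩
      · exact Set.mem_image_of_mem _ hℓ₀
  refine ⟨?_, ?_, ?_⟩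
  · -- t ≤ 2τ
    intro ht
    apply main 0 ⟨0, ⟨le_refl 0, hℓmax.le⟩, hG0 t⟩
    intro ℓ ⟨hℓ0, _⟩
    rcases eq_or_lt_of_le hℓ0 with h | h
    · rw [← h, hG0 t]
    · rw [hG t ℓ h]
      have hne2 : t - ℓ / μ - 2 * τ ≤ 0 := by
        have : 0 < ℓ / μ := by positivity
        linarith
      have hEx : 0 ≤ -(α * μ / ℓ) * (t - ℓ / μ - 2 * τ) := by
        have hp : 0 < α * μ / ℓ := by positivity
        nlinarith
      have h5 : 1 ≤ Real.exp (-(α * μ / ℓ) * (t - ℓ / μ - 2 * τ)) := Real.one_le_exp hEx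
      have : ℓ * (1 - Real.exp (-(α * μ / ℓ) * (t - ℓ / μ - 2 * τ))) ≤ 0 := by nlinarith
      exact max_le le_rfl this
  · -- 2τ < t ≤ ζ
    intro ht1 ht2
    have hT : 0 < t - 2 * τ := by linarith
    set T := t - 2 * τ with hTdef
    have hM : stilde * T = α * μ * T / (1 + w) := by rw [hstilde']; ring
    have hMpos : 0 < stilde * T := by rw [hM]; positivity
    apply main (stilde * T)
    · -- attained at ℓ* = s*T
      refine ⟨s * T, ⟨by positivity, ?_⟩, ?_⟩
      · have : T ≤ ℓmax / s := by rw [hζ] at ht2; linarith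
        calc s * T ≤ s * (ℓmax / s) := by nlinarith
          _ = ℓmax := by field_simp
      · rw [hG t (s * T) (by positivity)]
        have hE : -(α * μ / (s * T)) * (t - s * T / μ - 2 * τ) = α - w := by
          rw [hs, show t = T + 2 * τ by rw [hTdef]; ring]
          field_simp
          ring
        rw [hE, hexpaw]
        have hval : s * T * (1 - 1 / (1 + w)) = stilde * T := by
          rw [hstilde', hs]; field_simp; ring
        rw [hval, max_eq_right hMpos.le]
    · -- upper bound
      intro ℓ ⟨hℓ0, _⟩
      rcases eq_or_lt_of_le hℓ0 with h | h
      · rw [← h, hG0 t]; exact hMpos.le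
      · rw [hG t ℓ h]
        apply max_le hMpos.le
        have hE : -(α * μ / ℓ) * (t - ℓ / μ - 2 * τ) = α - α * μ * T / ℓ := by
          rw [show t = T + 2 * τ by rw [hTdef]; ring]
          field_simp
          ring
        rw [hE]
        have hk := key2 (α * μ * T / ℓ)
        have h6 : ℓ * ((1 + w) * (1 - Real.exp (α - α * μ * T / ℓ))) ≤ ℓ * (α * μ * T / ℓ) :=
          mul_le_mul_of_nonneg_left hk h.le
        have h7 : ℓ * (α * μ * T / ℓ) = α * μ * T := by field_simp
        rw [h7] at h6
        rw [hM, le_div_iff₀ h1w]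
        linarith [h6]
  · -- t > ζ
    intro ht
    have hTζ : ℓmax / s < t - 2 * τ := by rw [hζ] at ht; linarith
    have hT : 0 < t - 2 * τ := lt_trans (by positivity) hTζ
    set T := t - 2 * τ with hTdef
    set x₀ := α * μ * T / ℓmax with hx₀def
    have hx₀w : w < x₀ := by
      rw [hx₀def, lt_div_iff₀ hℓmax]
      rw [hs] at hTζ
      have : ℓmax * w / (α * μ) < T := by
        calc ℓmax * w / (α * μ) = ℓmax / (α * μ / w) := by field_simp
          _ < T := hTζ
      calc w * ℓmax = (ℓmax * w / (α * μ)) * (α * μ) := by field_simp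
        _ < T * (α * μ) := by nlinarith [mul_pos hα hμ]
        _ = α * μ * T := by ring
    have hEmax : -(α * μ / ℓmax) * (t - ℓmax / μ - 2 * τ) = α - x₀ := by
      rw [hx₀def, show t = T + 2 * τ by rw [hTdef]; ring]
      field_simp
      ring
    have hMpos : 0 ≤ ℓmax * (1 - Real.exp (α - x₀)) := by
      have : Real.exp (α - x₀) ≤ 1 := Real.exp_le_one_iff.2 (by linarith)
      nlinarith
    apply main
    · refine ⟨ℓmax, ⟨hℓmax.le, le_refl _⟩, ?_⟩
      rw [hG t ℓmax hℓmax, hEmax, max_eq_right hMpos]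
    · intro ℓ ⟨hℓ0, hℓm⟩
      rw [hEmax]
      rcases eq_or_lt_of_le hℓ0 with h | h
      · rw [← h, hG0 t]; exact hMpos
      · rw [hG t ℓ h]
        apply max_le hMpos
        have hE : -(α * μ / ℓ) * (t - ℓ / μ - 2 * τ) = α - α * μ * T / ℓ := by
          rw [show t = T + 2 * τ by rw [hTdef]; ring]
          field_simp
          ring
        rw [hE]
        set x := α * μ * T / ℓ with hxdef
        have hx₀x : x₀ ≤ x := by
          rw [hx₀def, hxdef]
          apply div_le_div_of_nonneg_left (by positivity) h hℓm
        have hk := key3 x₀ x hx₀w.le hx₀x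
        have hxℓ : x * ℓ = α * μ * T := by rw [hxdef]; field_simp
        have hx₀ℓ : x₀ * ℓmax = α * μ * T := by rw [hx₀def]; field_simp
        have hxp : 0 < x := lt_of_lt_of_le (lt_trans hw hx₀w) hx₀x
        have hx₀p : 0 < x₀ := lt_trans hw hx₀w
        have h8 : ℓ * (1 - Real.exp (α - x)) * (x * x₀) ≤
            ℓmax * (1 - Real.exp (α - x₀)) * (x * x₀) := by
          have h9 : ℓ * (1 - Real.exp (α - x)) * (x * x₀) =
              α * μ * T * (x₀ * (1 - Real.exp (α - x))) := by
            linear_combination (x₀ * (1 - Real.exp (α - x))) * hxℓ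
          have h10 : ℓmax * (1 - Real.exp (α - x₀)) * (x * x₀) =
              α * μ * T * (x * (1 - Real.exp (α - x₀))) := by
            linear_combination (x * (1 - Real.exp (α - x₀))) * hx₀ℓ
          rw [h9, h10]
          exact mul_le_mul_of_nonneg_left hk (by positivity)
        exact le_of_mul_le_mul_right h8 (by positivity)
end

section
/- In the coded federated gradient setup, fix θ ∈ ℝ^{q×c} and let g(θ) = (1/m) Σ_{j=1}^{n} X_jᵀ(X_j θ − Y_j) denote the full gradient. Define the coded gradient g_C(θ) = Σ_{j=1}^{n} Σ_{k=1}^{ℓ_j} w_{j,k}² x_{j,k}ᵀ(x_{j,k} θ − y_{j,k}) and the uncoded aggregate g_U(θ) = Σ_{j=1}^{n} B_j Σ_{k ∈ S_j} x_{j,k}ᵀ(x_{j,k} θ − y_{j,k}), and set g_M(θ) = (1/m)(g_C(θ) + g_U(θ)). Then the entrywise expectation satisfies E[g_M(θ)] = g(θ). -/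
open MeasureTheory ProbabilityTheory Matrix Finset

/-- Coded federated gradient setup: client `j` holds `X_j ∈ ℝ^{ℓ_j × q}` with
rows `x_{j,k}` and `Y_j ∈ ℝ^{ℓ_j × c}` with rows `y_{j,k}`; `m = Σ_j ℓ_j`;
`g θ = (1/m) Σ_j X_jᵀ (X_j θ - Y_j)` is the full gradient. With sampled sets `S_j`, arrival
probabilities `P_j`, mutually independent `{0,1}`-valued `B_j` with `ℙ(B_j = 1) = P_j`, weights
`w_{j,k}² = 1 - P_j` for `k ∈ S_j` and `1` otherwise, the coded gradient
`g_C θ = Σ_j Σ_k w_{j,k}² x_{j,k}ᵀ (x_{j,k} θ - y_{j,k})`, the uncoded aggregate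
`g_U θ = Σ_j B_j Σ_{k ∈ S_j} x_{j,k}ᵀ (x_{j,k} θ - y_{j,k})`, and
`g_M θ = (1/m) (g_C θ + g_U θ)`, the entrywise expectation satisfies `E[g_M θ] = g θ`. -/
theorem coded_federated_gradient_unbiased
    {Ω : Type*} [MeasureSpace Ω] [IsProbabilityMeasure (ℙ : Measure Ω)]
    (n q c : ℕ) (ℓ : Fin n → ℕ)
    (X : ∀ j : Fin n, Matrix (Fin (ℓ j)) (Fin q) ℝ)
    (Y : ∀ j : Fin n, Matrix (Fin (ℓ j)) (Fin c) ℝ)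
    (m : ℝ) (hm : m = ∑ j, (ℓ j : ℝ))
    (S : ∀ j : Fin n, Finset (Fin (ℓ j)))
    (P : Fin n → ℝ) (hP : ∀ j, P j ∈ Set.Icc (0 : ℝ) 1)
    (B : Fin n → Ω → ℝ)
    (hBmeas : ∀ j, Measurable (B j))
    (hB01 : ∀ j ω, B j ω = 0 ∨ B j ω = 1)
    (hBP : ∀ j, (ℙ {ω | B j ω = 1}).toReal = P j)
    (hindep : iIndepFun B ℙ)
    (wsq : ∀ j : Fin n, Fin (ℓ j) → ℝ)
    (hwsq : ∀ j k, wsq j k = if k ∈ S j then 1 - P j else 1)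
    (θ : Matrix (Fin q) (Fin c) ℝ)
    (g gC : Matrix (Fin q) (Fin c) ℝ)
    (gU : Ω → Matrix (Fin q) (Fin c) ℝ)
    (gM : Ω → Matrix (Fin q) (Fin c) ℝ)
    (hg : g = (1 / m) • ∑ j, (X j)ᵀ * ((X j) * θ - Y j))
    (hgC : gC = ∑ j, ∑ k, wsq j k •
      Matrix.vecMulVec (X j k) (Matrix.vecMul (X j k) θ - Y j k))
    (hgU : ∀ ω, gU ω = ∑ j, B j ω • ∑ k ∈ S j,
      Matrix.vecMulVec (X j k) (Matrix.vecMul (X j k) θ - Y j k))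
    (hgM : ∀ ω, gM ω = (1 / m) • (gC + gU ω)) :
    ∀ (i : Fin q) (i' : Fin c), ∫ ω, gM ω i i' ∂ℙ = g i i' := by

  intro i i'
  -- entrywise value of A
  set A : ∀ j : Fin n, Fin (ℓ j) → ℝ := fun j k =>
    Matrix.vecMulVec (X j k) (Matrix.vecMul (X j k) θ - Y j k) i i' with hA
  set cj : Fin n → ℝ := fun j => ∑ k ∈ S j, A j k with hcj
  -- B j as indicator
  have hBind : ∀ j, B j = Set.indicator {ω | B j ω = 1} (fun _ => (1:ℝ)) := by
    intro j; funext ω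
    rcases hB01 j ω with h | h <;> simp [Set.indicator_apply, h]
  have hmeas : ∀ j, MeasurableSet {ω | B j ω = 1} := fun j =>
    (hBmeas j) (measurableSet_singleton 1)
  have hBint : ∀ j, Integrable (B j) ℙ := by
    intro j
    rw [hBind j]
    exact (integrable_const (1:ℝ)).indicator (hmeas j)
  have hBexp : ∀ j, ∫ ω, B j ω ∂ℙ = P j := by
    intro j
    rw [hBind j]
    rw [integral_indicator_const _ (hmeas j)]
    simp [hBP j]; exact hBP j
  have hgMfun : (fun ω => gM ω i i')
      = fun ω => (1/m) * (gC i i' + ∑ j, B j ω * cj j) := by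
    funext ω
    simp only [hgM, hgU, Matrix.smul_apply, Matrix.add_apply, Matrix.sum_apply,
      smul_eq_mul, hcj, hA]
  rw [hgMfun]
  have hint : Integrable (fun ω => ∑ j, B j ω * cj j) ℙ :=
    integrable_finset_sum _ (fun j _ => (hBint j).mul_const (cj j))
  rw [integral_const_mul]
  rw [integral_add (integrable_const _) hint]
  rw [integral_finset_sum _ (fun j _ => (hBint j).mul_const (cj j))]
  simp only [integral_mul_const, hBexp, integral_const, measure_univ, probReal_univ,
    ENNReal.toReal_one, one_smul, smul_eq_mul, one_mul]
  -- now pure algebra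
  have hgCval : gC i i' = ∑ j, ∑ k, wsq j k * A j k := by
    simp only [hgC, Matrix.sum_apply, Matrix.smul_apply, smul_eq_mul, hA]
  have hgval : g i i' = (1/m) * ∑ j, ∑ k, A j k := by
    simp only [hg, Matrix.smul_apply, Matrix.sum_apply, smul_eq_mul,
      Matrix.mul_apply, Matrix.vecMulVec_apply, Matrix.vecMul, dotProduct,
      Matrix.sub_apply, Pi.sub_apply, Matrix.transpose_apply, hA]
  rw [hgCval, hgval]
  congr 1
  rw [← Finset.sum_add_distrib]
  apply Finset.sum_congr rfl
  intro j _
  have hsplit : ∀ f : Fin (ℓ j) → ℝ,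
      ∑ k, f k = ∑ k ∈ S j, f k + ∑ k ∈ (S j)ᶜ, f k := by
    intro f
    rw [← Finset.sum_add_sum_compl (S j) f]
  rw [hsplit (fun k => wsq j k * A j k), hsplit (fun k => A j k)]
  have h1 : ∑ k ∈ S j, wsq j k * A j k = ∑ k ∈ S j, (1 - P j) * A j k :=
    Finset.sum_congr rfl (fun k hk => by rw [hwsq]; simp [hk])
  have h2 : ∑ k ∈ (S j)ᶜ, wsq j k * A j k = ∑ k ∈ (S j)ᶜ, A j k :=
    Finset.sum_congr rfl (fun k hk => by
      rw [hwsq]; simp [Finset.mem_compl.mp hk])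
  rw [h1, h2, hcj]
  simp only [sub_mul, one_mul, Finset.sum_sub_distrib, Finset.mul_sum]
  ring
end
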